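/- arXiv:0708.1582 — 3 statements merged into one kernel-verified Lean document; each statement's English description precedes it below -/
import Mathlib

section
/- For a valley permutation w with floor at a, the number of inversions ℓ(w) equals |μ(w)|, the sum of w(i) - 1 over i = 1,...,a. -/
/-- `w` fixes every point outside `{1,…,n}`, so it is a permutation of `{1,…,n}`. -/
def FixOutside (n : ℕ) (w : Equiv.Perm ℕ) : Prop :=
  ∀ i, i ∉ Finset.Icc 1 n → w i = i

/-- `w` is a valley permutation of `{1,…,n}` with floor at `a`:
`w(1) > w(2) > ⋯ > w(a)` and `w(a+1) < ⋯ < w(n)`. -/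
def IsValley (n a : ℕ) (w : Equiv.Perm ℕ) : Prop :=
  (∀ i j, 1 ≤ i → i < j → j ≤ a → w j < w i) ∧
  (∀ i j, a < i → i < j → j ≤ n → w i < w j)

/-- The number of inversions of `w` as a permutation of `{1,…,n}`. -/
def NumInv (n : ℕ) (w : Equiv.Perm ℕ) : ℕ :=
  ((Finset.Icc 1 n ×ˢ Finset.Icc 1 n).filter
    (fun p => p.1 < p.2 ∧ w p.2 < w p.1)).card

/-- The relation `v ≤_a w` on permutations of `{1,…,n}`:
(1) for `i ≤ a < j`, `w(i) ≥ v(i)` and `w(j) ≤ v(j)`;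
(2) for `i < j ≤ a` with `v(i) < v(j)`, `w(i) < w(j)`; and
    for `a < i < j` with `v(i) < v(j)`, `w(i) < w(j)`. -/
def ABruhat (n a : ℕ) (v w : Equiv.Perm ℕ) : Prop :=
  (∀ i j, 1 ≤ i → i ≤ a → a < j → j ≤ n → v i ≤ w i ∧ w j ≤ v j) ∧
  (∀ i j, 1 ≤ i → i < j → j ≤ a → v i < v j → w i < w j) ∧
  (∀ i j, a < i → i < j → j ≤ n → v i < v j → w i < w j)

lemma mem_of_mem (n : ℕ) (w : Equiv.Perm ℕ) (hwf : FixOutside n w)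
    {i : ℕ} (hi : i ∈ Finset.Icc 1 n) : w i ∈ Finset.Icc 1 n := by
  by_contra h
  have h1 := hwf (w i) h
  have : w i = i := w.injective h1
  rw [this] at h
  exact h hi

lemma symm_mem_of_mem (n : ℕ) (w : Equiv.Perm ℕ) (hwf : FixOutside n w)
    {v : ℕ} (hv : v ∈ Finset.Icc 1 n) : w.symm v ∈ Finset.Icc 1 n := by
  by_contra h
  have h1 := hwf (w.symm v) h
  rw [Equiv.apply_symm_apply] at h1
  rw [← h1] at h
  exact h hv

/-- For a valley permutation `w` with floor at `a`, the number of inversions `ℓ(w)`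
equals `|μ(w)| = ∑_{i=1}^{a} (w(i) − 1)`. -/
theorem valley_length_eq_shape_size (n a : ℕ) (ha1 : 1 ≤ a) (ha2 : a ≤ n)
    (w : Equiv.Perm ℕ) (hwf : FixOutside n w) (hw : IsValley n a w) :
    NumInv n w = ∑ i ∈ Finset.Icc 1 a, (w i - 1) := by
  classical
  have hsum : NumInv n w
      = ∑ i ∈ Finset.Icc 1 n,
          ((Finset.Icc 1 n).filter (fun j => i < j ∧ w j < w i)).card := by
    rw [NumInv, Finset.card_eq_sum_card_fiberwise
      (f := Prod.fst) (t := Finset.Icc 1 n)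
      (by intro p hp; simp only [Finset.mem_coe, Finset.mem_filter, Finset.mem_product] at hp; exact hp.1.1)]
    refine Finset.sum_congr rfl fun i hi => ?_
    refine Finset.card_nbij (fun p => p.2) ?_ ?_ ?_
    · intro p hp
      simp only [Finset.mem_coe, Finset.mem_filter, Finset.mem_product] at hp ⊢
      obtain ⟨⟨⟨_, h2⟩, hP⟩, hfst⟩ := hp
      subst hfst
      exact ⟨h2, hP⟩
    · intro p hp q hq hpq
      simp only [Finset.mem_coe, Finset.mem_filter] at hp hq
      exact Prod.ext (hp.2.trans hq.2.symm) hpq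
    · intro j hj
      simp only [Finset.mem_coe, Finset.mem_filter] at hj
      exact ⟨(i, j), by simp [Finset.mem_filter, Finset.mem_product, Finset.mem_Icc.mp hj.1, hj.2,
        Finset.mem_Icc.mp hi], rfl⟩
  rw [hsum]
  rw [← Finset.sum_subset (Finset.Icc_subset_Icc_right ha2 : Finset.Icc 1 a ⊆ Finset.Icc 1 n)]
  · refine Finset.sum_congr rfl fun i hi => ?_
    rw [Finset.mem_Icc] at hi
    have hin : i ∈ Finset.Icc 1 n := Finset.mem_Icc.mpr ⟨hi.1, hi.2.trans ha2⟩
    have hwi := Finset.mem_Icc.mp (mem_of_mem n w hwf hin)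
    have hcard : ((Finset.Icc 1 n).filter (fun j => i < j ∧ w j < w i)).card
        = (Finset.Icc 1 (w i - 1)).card := by
      refine Finset.card_nbij (fun j => w j) ?_ ?_ ?_
      · intro j hj
        simp only [Finset.mem_coe, Finset.mem_filter, Finset.mem_Icc] at hj ⊢
        have := Finset.mem_Icc.mp (mem_of_mem n w hwf (Finset.mem_Icc.mpr hj.1))
        omega
      · intro x _ y _ hxy
        exact w.injective hxy
      · intro v hv
        simp only [Finset.mem_coe, Finset.mem_Icc] at hv
        have hvn : v ∈ Finset.Icc 1 n := Finset.mem_Icc.mpr ⟨hv.1, by omega⟩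
        set j := w.symm v with hjdef
        have hjn := symm_mem_of_mem n w hwf hvn
        have hwj : w j = v := Equiv.apply_symm_apply w v
        have hij : i < j := by
          rcases lt_trichotomy i j with h | h | h
          · exact h
          · exfalso; rw [← h] at hwj; omega
          · exfalso
            have := hw.1 j i (Finset.mem_Icc.mp hjn).1 h hi.2
            omega
        refine ⟨j, ?_, hwj⟩
        simp only [Finset.mem_coe, Finset.mem_filter]
        exact ⟨hjn, hij, by omega⟩
    rw [hcard, Nat.card_Icc]
    omega
  · intro i hin hia
    rw [Finset.mem_Icc] at hin
    rw [Finset.mem_Icc] at hia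
    have hai : a < i := by omega
    rw [Finset.card_eq_zero, Finset.filter_eq_empty_iff]
    intro j hj
    rw [Finset.mem_Icc] at hj
    intro hcon
    have := hw.2 i j hai hcon.1 hj.2
    omega
end

section
/- Define a Grassmannian Schubert problem datum Λ = ((a_1,λ_1),...,(a_s,λ_s)) with a_1 ≤ ... ≤ a_s, a_i ∈ α, λ_i a partition in the a_i × (n - a_i) rectangle. Inserting a new pair (b, κ), where α_i < b < α_{i+1} for consecutive elements of α and κ is the rectangular partition with b - α_i rows and α_{i+1} - b columns, gives a bijection between filtered tableaux of shape ⎡_α with content Λ and filtered tableaux of shape ⎡_{α ∪ {b}} with content Λ' = ((a_1,λ_1),...,(b,κ),...,(a_s,λ_s)) (inserted in sorted position). -/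
/-- The rectangle `b × (n−b)`, with the shared upper-right-corner convention:
boxes `(i,j)` with `1 ≤ i ≤ b` and `b ≤ j ≤ n−1`. -/
def Rect (n b : ℕ) : Finset (ℕ × ℕ) := Finset.Icc 1 b ×ˢ Finset.Icc b (n - 1)

/-- The region `⎡_α`, the union of the rectangles `a × (n−a)` for `a ∈ α`
sharing a common upper-right corner. -/
def Staircase (n : ℕ) (α : Finset ℕ) : Finset (ℕ × ℕ) := α.biUnion fun a => Rect n a

/-- `μ` is a (northwest-justified) shape inside the region `R`. -/
def IsShapeIn (R μ : Finset (ℕ × ℕ)) : Prop :=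
  μ ⊆ R ∧ ∀ p ∈ μ, ∀ q ∈ R, q.1 ≤ p.1 → q.2 ≤ p.2 → q ∈ μ

/-- The boxes of `S` read (right-to-left along rows, top-to-bottom) no later
than the box `p`. -/
def ReadPrefix (S : Finset (ℕ × ℕ)) (p : ℕ × ℕ) : Finset (ℕ × ℕ) :=
  S.filter fun q => q.1 < p.1 ∨ (q.1 = p.1 ∧ p.2 ≤ q.2)

/-- `T` is a Littlewood–Richardson filling of the (skew) shape `S` with content `lam`:
positive entries (normalized to `0` off `S`), rows weakly increasing, columns strictly
increasing, exactly `lam j` entries equal to `j`, and the right-to-left top-to-bottom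
reading word is a lattice word. -/
def IsLR (S : Finset (ℕ × ℕ)) (lam : ℕ → ℕ) (T : ℕ × ℕ → ℕ) : Prop :=
  (∀ p ∈ S, 1 ≤ T p) ∧
  (∀ q, q ∉ S → T q = 0) ∧
  (∀ p ∈ S, ∀ q ∈ S, p.1 = q.1 → p.2 ≤ q.2 → T p ≤ T q) ∧
  (∀ p ∈ S, ∀ q ∈ S, p.2 = q.2 → p.1 < q.1 → T p < T q) ∧
  (∀ j, 1 ≤ j → (S.filter fun q => T q = j).card = lam j) ∧
  (∀ p ∈ S, ∀ i, 1 ≤ i →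
    ((ReadPrefix S p).filter fun q => T q = i + 1).card ≤
      ((ReadPrefix S p).filter fun q => T q = i).card)

/-- A filtered tableau with shape `⎡_α` and content `((a 1, lam 1), …, (a s, lam s))`:
a chain of shapes `∅ = μ_0 ⊆ μ_1 ⊆ ⋯ ⊆ μ_s = ⎡_α` in `⎡_α`, together with fillings
`T_i` of the skew shapes `μ_i/μ_{i−1}`, such that `μ_i/μ_{i−1}` lies in the rectangle
`a_i × (n − a_i)` and `T_i` is a Littlewood–Richardson tableau of content `lam i`. -/
def IsFilteredTableau (n s : ℕ) (α : Finset ℕ) (a : ℕ → ℕ) (lam : ℕ → ℕ → ℕ)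
    (F : (Fin (s + 1) → Finset (ℕ × ℕ)) × (Fin s → ℕ × ℕ → ℕ)) : Prop :=
  F.1 0 = ∅ ∧ F.1 (Fin.last s) = Staircase n α ∧
  (∀ i : Fin (s + 1), IsShapeIn (Staircase n α) (F.1 i)) ∧
  (∀ i : Fin s, F.1 i.castSucc ⊆ F.1 i.succ) ∧
  (∀ i : Fin s, (F.1 i.succ \ F.1 i.castSucc) ⊆ Rect n (a (i.val + 1))) ∧
  (∀ i : Fin s, IsLR (F.1 i.succ \ F.1 i.castSucc) (lam (i.val + 1)) (F.2 i))

namespace InsAux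

lemma fin_congr {β : Sort*} {m : ℕ} (f : Fin m → β) (x y : ℕ) (hx : x < m) (hy : y < m)
    (h : x = y) : f ⟨x, hx⟩ = f ⟨y, hy⟩ := by subst h; rfl

lemma chain_mono {s' : ℕ} (μ : Fin (s' + 1) → Finset (ℕ × ℕ))
    (h : ∀ i : Fin s', μ i.castSucc ⊆ μ i.succ) :
    ∀ x y : ℕ, ∀ (hxy : x ≤ y) (hy : y ≤ s'), μ ⟨x, by omega⟩ ⊆ μ ⟨y, by omega⟩ := by
  intro x y
  induction y with
  | zero =>
    intro hxy hy
    have e : (⟨x, by omega⟩ : Fin (s' + 1)) = ⟨0, by omega⟩ := Fin.ext (by simp; omega)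
    rw [e]
  | succ k ih =>
    intro hxy hy
    rcases Nat.lt_or_ge k x with h1 | h1
    · have e : (⟨x, by omega⟩ : Fin (s' + 1)) = ⟨k + 1, by omega⟩ := Fin.ext (by simp; omega)
      rw [e]
    · exact (ih h1 (by omega)).trans (h ⟨k, by omega⟩)

lemma buildup {s' : ℕ} (μ : Fin (s' + 1) → Finset (ℕ × ℕ)) (R : ℕ → Finset (ℕ × ℕ))
    (h0 : μ 0 = ∅)
    (hsub : ∀ i : Fin s', μ i.succ \ μ i.castSucc ⊆ R (i.val + 1)) :
    ∀ jv : ℕ, ∀ (hj : jv ≤ s'), ∀ q ∈ μ ⟨jv, by omega⟩, ∃ i, 1 ≤ i ∧ i ≤ jv ∧ q ∈ R i := by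
  intro jv
  induction jv with
  | zero =>
    intro hj q hq
    have : (⟨0, by omega⟩ : Fin (s' + 1)) = 0 := rfl
    rw [this, h0] at hq; simp at hq
  | succ k ih =>
    intro hj q hq
    by_cases hqk : q ∈ μ ⟨k, by omega⟩
    · obtain ⟨i, h1, h2, h3⟩ := ih (by omega) q hqk
      exact ⟨i, h1, by omega, h3⟩
    · exact ⟨k + 1, by omega, le_refl _, hsub ⟨k, by omega⟩ (Finset.mem_sdiff.mpr ⟨hq, hqk⟩)⟩

lemma descend {s' : ℕ} (μ : Fin (s' + 1) → Finset (ℕ × ℕ)) (R : ℕ → Finset (ℕ × ℕ))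
    (hsub : ∀ i : Fin s', μ i.succ \ μ i.castSucc ⊆ R (i.val + 1))
    (p0 : ℕ) (q : ℕ × ℕ) (hq : ∀ i, p0 < i → i ≤ s' → q ∉ R i) :
    ∀ t : ℕ, ∀ (ht : p0 + t ≤ s'), q ∈ μ ⟨p0 + t, by omega⟩ → q ∈ μ ⟨p0, by omega⟩ := by
  intro t
  induction t with
  | zero => intro ht h; exact h
  | succ k ih =>
    intro ht h
    apply ih (by omega)
    by_contra hnot
    exact hq (p0 + k + 1) (by omega) (by omega)
      (hsub ⟨p0 + k, by omega⟩ (Finset.mem_sdiff.mpr ⟨h, hnot⟩))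

lemma IsLR_congr {S S' : Finset (ℕ × ℕ)} {lam lam' : ℕ → ℕ} {T T' : ℕ × ℕ → ℕ}
    (h : IsLR S lam T) (hS : S' = S) (hlam : ∀ j, 1 ≤ j → lam' j = lam j)
    (hT : ∀ q, T' q = T q) : IsLR S' lam' T' := by
  have hTf : T' = T := funext hT
  subst hS hTf
  obtain ⟨h1, h2, h3, h4, h5, h6⟩ := h
  exact ⟨h1, h2, h3, h4, fun j hj => (hlam j hj) ▸ h5 j hj, h6⟩

def kap (b c d : ℕ) : ℕ → ℕ := fun jj => if 1 ≤ jj ∧ jj ≤ b - c then d - b else 0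

lemma canonical_isLR (b c d : ℕ) (hcb : c < b) (hbd : b < d) :
    IsLR (Finset.Icc (c + 1) b ×ˢ Finset.Icc b (d - 1)) (kap b c d)
      (fun q => if q ∈ Finset.Icc (c + 1) b ×ˢ Finset.Icc b (d - 1) then q.1 - c else 0) := by
  have hmem : ∀ q : ℕ × ℕ, q ∈ Finset.Icc (c + 1) b ×ˢ Finset.Icc b (d - 1) ↔
      (c + 1 ≤ q.1 ∧ q.1 ≤ b ∧ b ≤ q.2 ∧ q.2 ≤ d - 1) := by
    intro q; simp only [Finset.mem_product, Finset.mem_Icc]; tauto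
  refine ⟨?_, ?_, ?_, ?_, ?_, ?_⟩
  · intro q hq; simp only [if_pos hq]; have := (hmem q).mp hq; omega
  · intro q hq; simp only [if_neg hq]
  · intro q hq r hr h1 _; simp only [if_pos hq, if_pos hr, h1]; exact le_rfl
  · intro q hq r hr _ h2
    simp only [if_pos hq, if_pos hr]
    have := (hmem q).mp hq; omega
  · intro j hj
    have hfe : (Finset.Icc (c + 1) b ×ˢ Finset.Icc b (d - 1)).filter
          (fun q => (if q ∈ Finset.Icc (c + 1) b ×ˢ Finset.Icc b (d - 1) then q.1 - c else 0) = j)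
        = (Finset.Icc (c + 1) b ×ˢ Finset.Icc b (d - 1)).filter (fun q => q.1 = c + j) := by
      apply Finset.filter_congr
      intro q hq
      rw [if_pos hq]
      have := (hmem q).mp hq
      omega
    rw [hfe]
    simp only [kap]
    by_cases hjb : j ≤ b - c
    · have hset : (Finset.Icc (c + 1) b ×ˢ Finset.Icc b (d - 1)).filter (fun q => q.1 = c + j)
          = {c + j} ×ˢ Finset.Icc b (d - 1) := by
        ext q
        simp only [Finset.mem_filter, Finset.mem_product, Finset.mem_Icc, Finset.mem_singleton]
        omega
      rw [hset, Finset.card_product, Finset.card_singleton, Nat.card_Icc, if_pos ⟨hj, hjb⟩]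
      omega
    · have hset : (Finset.Icc (c + 1) b ×ˢ Finset.Icc b (d - 1)).filter (fun q => q.1 = c + j)
          = ∅ := by
        ext q
        simp only [Finset.mem_filter, Finset.mem_product, Finset.mem_Icc, Finset.notMem_empty,
          iff_false, not_and]
        omega
      rw [hset, if_neg (by omega)]
      rfl
  · intro p0 hp0 i hi
    apply Finset.card_le_card_of_injOn (fun q => (q.1 - 1, q.2))
    · intro q hq
      simp only [ReadPrefix, Finset.mem_coe, Finset.mem_filter] at hq ⊢
      obtain ⟨⟨hqK, hqpre⟩, hqT⟩ := hq
      rw [if_pos hqK] at hqT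
      have hb1 := (hmem q).mp hqK
      have hK2 : ((q.1 - 1, q.2) : ℕ × ℕ) ∈ Finset.Icc (c + 1) b ×ˢ Finset.Icc b (d - 1) := by
        rw [hmem]
        refine ⟨by omega, by omega, by omega, by omega⟩
      refine ⟨⟨hK2, ?_⟩, ?_⟩
      · left
        show q.1 - 1 < p0.1
        rcases hqpre with h | h <;> omega
      · rw [if_pos hK2]
        show q.1 - 1 - c = i
        omega
    · intro q1 h1 q2 h2 he
      have h1' : q1 ∈ (ReadPrefix (Finset.Icc (c + 1) b ×ˢ Finset.Icc b (d - 1)) p0).filter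
          (fun q => (if q ∈ Finset.Icc (c + 1) b ×ˢ Finset.Icc b (d - 1) then q.1 - c else 0) = i + 1) := h1
      have h2' : q2 ∈ (ReadPrefix (Finset.Icc (c + 1) b ×ˢ Finset.Icc b (d - 1)) p0).filter
          (fun q => (if q ∈ Finset.Icc (c + 1) b ×ˢ Finset.Icc b (d - 1) then q.1 - c else 0) = i + 1) := h2
      simp only [ReadPrefix, Finset.mem_filter] at h1' h2'
      obtain ⟨⟨h1K, _⟩, h1T⟩ := h1'
      obtain ⟨⟨h2K, _⟩, h2T⟩ := h2'
      rw [if_pos h1K] at h1T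
      rw [if_pos h2K] at h2T
      have hb1 := (hmem q1).mp h1K
      have hb2 := (hmem q2).mp h2K
      simp only [Prod.mk.injEq] at he
      exact Prod.ext (by omega) he.2

lemma rect_piece_unique (b c d : ℕ) (hcb : c < b) (hbd : b < d)
    (S : Finset (ℕ × ℕ)) (U : ℕ × ℕ → ℕ)
    (hKS : Finset.Icc (c + 1) b ×ˢ Finset.Icc b (d - 1) ⊆ S)
    (hLR : IsLR S (kap b c d) U) :
    S = Finset.Icc (c + 1) b ×ˢ Finset.Icc b (d - 1) ∧
      U = fun q => if q ∈ Finset.Icc (c + 1) b ×ˢ Finset.Icc b (d - 1) then q.1 - c else 0 := by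
  obtain ⟨h1, h2, h3, h4, h5, h6⟩ := hLR
  have hub : ∀ q ∈ S, U q ≤ b - c := by
    intro q hq
    by_contra hgt
    have hcard := h5 (U q) (by have := h1 q hq; omega)
    simp only [kap] at hcard
    rw [if_neg (by omega)] at hcard
    have hmem2 : q ∈ S.filter (fun r => U r = U q) := Finset.mem_filter.mpr ⟨hq, rfl⟩
    rw [Finset.card_eq_zero.mp hcard] at hmem2
    simp at hmem2
  have hSeq : S = (Finset.Icc 1 (b - c)).biUnion (fun j => S.filter fun q => U q = j) := by
    ext q
    simp only [Finset.mem_biUnion, Finset.mem_filter, Finset.mem_Icc]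
    constructor
    · intro hq; exact ⟨U q, ⟨h1 q hq, hub q hq⟩, hq, rfl⟩
    · rintro ⟨j, _, hq, _⟩; exact hq
  have hcardS : S.card = (b - c) * (d - b) := by
    rw [hSeq, Finset.card_biUnion]
    · have hconst : ∀ j ∈ Finset.Icc 1 (b - c), (S.filter fun q => U q = j).card = d - b := by
        intro j hj
        have h5' := h5 j (Finset.mem_Icc.mp hj).1
        simp only [kap] at h5'
        rw [h5', if_pos ⟨(Finset.mem_Icc.mp hj).1, (Finset.mem_Icc.mp hj).2⟩]
      rw [Finset.sum_congr rfl hconst, Finset.sum_const, Nat.card_Icc, smul_eq_mul]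
      congr 1
    · intro x _ y _ hxy
      refine Finset.disjoint_left.mpr ?_
      intro q hqx hqy
      exact hxy (((Finset.mem_filter.mp hqx).2).symm.trans (Finset.mem_filter.mp hqy).2)
  have hKcard : (Finset.Icc (c + 1) b ×ˢ Finset.Icc b (d - 1)).card = (b - c) * (d - b) := by
    rw [Finset.card_product, Nat.card_Icc, Nat.card_Icc]
    congr 1 <;> omega
  have hS : S = Finset.Icc (c + 1) b ×ˢ Finset.Icc b (d - 1) :=
    (Finset.eq_of_subset_of_card_le hKS (by rw [hcardS, hKcard])).symm
  refine ⟨hS, ?_⟩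
  funext q
  by_cases hq : q ∈ Finset.Icc (c + 1) b ×ˢ Finset.Icc b (d - 1)
  · rw [if_pos hq]
    obtain ⟨r, col⟩ := q
    have hbA := Finset.mem_Icc.mp (Finset.mem_product.mp hq).1
    have hbB := Finset.mem_Icc.mp (Finset.mem_product.mp hq).2
    have hcol : ∀ x, c + 1 ≤ x → x ≤ b → ((x, col) : ℕ × ℕ) ∈ S := by
      intro x hx1 hx2
      apply hKS
      simp only [Finset.mem_product, Finset.mem_Icc]
      exact ⟨⟨hx1, hx2⟩, hbB⟩
    have low : ∀ i, 1 ≤ i → i ≤ b - c → i ≤ U (c + i, col) := by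
      intro i
      induction i with
      | zero => omega
      | succ k ihk =>
        intro _ hkb
        by_cases hk : k = 0
        · subst hk
          exact h1 _ (hcol (c + 1) le_rfl (by omega))
        · have hk1 := ihk (by omega) (by omega)
          have hlt := h4 (c + k, col) (hcol _ (by omega) (by omega))
            (c + (k + 1), col) (hcol _ (by omega) (by omega)) rfl
            (show c + k < c + (k + 1) by omega)
          omega
    have high : ∀ i, i ≤ b - c - 1 → U (b - i, col) ≤ b - c - i := by
      intro i
      induction i with
      | zero =>
        intro _
        simpa using hub (b, col) (hcol b (by omega) le_rfl)
      | succ k ihk =>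
        intro hkb
        have hk1 := ihk (by omega)
        have hlt := h4 (b - (k + 1), col) (hcol _ (by omega) (by omega))
          (b - k, col) (hcol _ (by omega) (by omega)) rfl
          (show b - (k + 1) < b - k by omega)
        omega
    have l1 := low (r - c) (by omega) (by omega)
    have l2 := high (b - r) (by omega)
    have e1 : c + (r - c) = r := by omega
    have e2 : b - (b - r) = r := by omega
    rw [e1] at l1
    rw [e2] at l2
    show U (r, col) = r - c
    omega
  · rw [if_neg hq]
    exact h2 q (by rw [hS]; exact hq)

def phiShapeN (s p : ℕ) (hp : p ≤ s) (K : Finset (ℕ × ℕ))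
    (μ : Fin (s + 1) → Finset (ℕ × ℕ)) : ℕ → Finset (ℕ × ℕ) := fun jv =>
  if h : jv ≤ p then μ ⟨jv, by omega⟩
  else if h2 : jv ≤ s + 1 then μ ⟨jv - 1, by omega⟩ ∪ K else ∅

def phiFillN (s p : ℕ) (hp : p ≤ s) (c : ℕ) (K : Finset (ℕ × ℕ))
    (T : Fin s → ℕ × ℕ → ℕ) : ℕ → ℕ × ℕ → ℕ := fun iv =>
  if h : iv < p then T ⟨iv, by omega⟩
  else if h2 : iv = p then (fun q => if q ∈ K then q.1 - c else 0)
  else if h3 : iv ≤ s ∧ 1 ≤ iv then T ⟨iv - 1, by omega⟩ else fun _ => 0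

def psiShapeN (s p : ℕ) (hp : p ≤ s) (K : Finset (ℕ × ℕ))
    (ν : Fin (s + 2) → Finset (ℕ × ℕ)) : ℕ → Finset (ℕ × ℕ) := fun jv =>
  if h : jv ≤ p then ν ⟨jv, by omega⟩
  else if h2 : jv ≤ s then ν ⟨jv + 1, by omega⟩ \ K else ∅

def psiFillN (s p : ℕ) (hp : p ≤ s) (U : Fin (s + 1) → ℕ × ℕ → ℕ) : ℕ → ℕ × ℕ → ℕ := fun iv =>
  if h : iv < p then U ⟨iv, by omega⟩
  else if h2 : iv < s then U ⟨iv + 1, by omega⟩ else fun _ => 0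

lemma phiShapeN_le {s p : ℕ} (hp : p ≤ s) (K : Finset (ℕ × ℕ))
    (μ : Fin (s + 1) → Finset (ℕ × ℕ)) (jv : ℕ) (h : jv ≤ p) :
    phiShapeN s p hp K μ jv = μ ⟨jv, by omega⟩ := dif_pos h

lemma phiShapeN_gt {s p : ℕ} (hp : p ≤ s) (K : Finset (ℕ × ℕ))
    (μ : Fin (s + 1) → Finset (ℕ × ℕ)) (jv : ℕ) (h : p < jv) (h2 : jv ≤ s + 1) :
    phiShapeN s p hp K μ jv = μ ⟨jv - 1, by omega⟩ ∪ K := by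
  rw [phiShapeN, dif_neg (by omega), dif_pos h2]

lemma phiFillN_lt {s p : ℕ} (hp : p ≤ s) (c : ℕ) (K : Finset (ℕ × ℕ))
    (T : Fin s → ℕ × ℕ → ℕ) (iv : ℕ) (h : iv < p) :
    phiFillN s p hp c K T iv = T ⟨iv, by omega⟩ := dif_pos h

lemma phiFillN_eq {s p : ℕ} (hp : p ≤ s) (c : ℕ) (K : Finset (ℕ × ℕ))
    (T : Fin s → ℕ × ℕ → ℕ) (iv : ℕ) (h : iv = p) :
    phiFillN s p hp c K T iv = fun q => if q ∈ K then q.1 - c else 0 := by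
  rw [phiFillN, dif_neg (by omega), dif_pos h]

lemma phiFillN_gt {s p : ℕ} (hp : p ≤ s) (c : ℕ) (K : Finset (ℕ × ℕ))
    (T : Fin s → ℕ × ℕ → ℕ) (iv : ℕ) (h : p < iv) (h2 : iv ≤ s) :
    phiFillN s p hp c K T iv = T ⟨iv - 1, by omega⟩ := by
  rw [phiFillN, dif_neg (by omega), dif_neg (by omega), dif_pos ⟨h2, by omega⟩]

lemma psiShapeN_le {s p : ℕ} (hp : p ≤ s) (K : Finset (ℕ × ℕ))
    (ν : Fin (s + 2) → Finset (ℕ × ℕ)) (jv : ℕ) (h : jv ≤ p) :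
    psiShapeN s p hp K ν jv = ν ⟨jv, by omega⟩ := dif_pos h

lemma psiShapeN_gt {s p : ℕ} (hp : p ≤ s) (K : Finset (ℕ × ℕ))
    (ν : Fin (s + 2) → Finset (ℕ × ℕ)) (jv : ℕ) (h : p < jv) (h2 : jv ≤ s) :
    psiShapeN s p hp K ν jv = ν ⟨jv + 1, by omega⟩ \ K := by
  rw [psiShapeN, dif_neg (by omega), dif_pos h2]

lemma psiFillN_lt {s p : ℕ} (hp : p ≤ s) (U : Fin (s + 1) → ℕ × ℕ → ℕ) (iv : ℕ) (h : iv < p) :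
    psiFillN s p hp U iv = U ⟨iv, by omega⟩ := dif_pos h

lemma psiFillN_ge {s p : ℕ} (hp : p ≤ s) (U : Fin (s + 1) → ℕ × ℕ → ℕ) (iv : ℕ)
    (h : p ≤ iv) (h2 : iv < s) :
    psiFillN s p hp U iv = U ⟨iv + 1, by omega⟩ := by
  by_cases hlt : iv < p
  · omega
  · rw [psiFillN, dif_neg hlt, dif_pos h2]

set_option maxHeartbeats 2000000 in
lemma fwd_mem (n s : ℕ) (α : Finset ℕ) (b c d : ℕ) (hcb : c < b) (hbd : b < d)
    (hc : c ∈ α) (hd : d ∈ α) (hc1 : 1 ≤ c) (hdn : d ≤ n - 1)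
    (a : ℕ → ℕ) (lam : ℕ → ℕ → ℕ) (p : ℕ) (hp : p ≤ s)
    (haC : ∀ i, 1 ≤ i → i ≤ p → a i ≤ c)
    (haD : ∀ i, p < i → i ≤ s → d ≤ a i)
    (hstair : Staircase n (insert b α)
      = Staircase n α ∪ Finset.Icc (c + 1) b ×ˢ Finset.Icc b (d - 1))
    (hKS : ∀ q ∈ Finset.Icc (c + 1) b ×ˢ Finset.Icc b (d - 1), q ∉ Staircase n α)
    (hKR : Finset.Icc (c + 1) b ×ˢ Finset.Icc b (d - 1) ⊆ Rect n b)
    (μ : Fin (s + 1) → Finset (ℕ × ℕ)) (T : Fin s → ℕ × ℕ → ℕ)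
    (hF : IsFilteredTableau n s α a lam (μ, T)) :
    IsFilteredTableau n (s + 1) (insert b α)
      (fun i => if i ≤ p then a i else if i = p + 1 then b else a (i - 1))
      (fun i jj => if i ≤ p then lam i jj
        else if i = p + 1 then (if 1 ≤ jj ∧ jj ≤ b - c then d - b else 0)
        else lam (i - 1) jj)
      (fun j => phiShapeN s p hp (Finset.Icc (c + 1) b ×ˢ Finset.Icc b (d - 1)) μ ↑j,
       fun i => phiFillN s p hp c (Finset.Icc (c + 1) b ×ˢ Finset.Icc b (d - 1)) T ↑i) := by
  classical
  set K : Finset (ℕ × ℕ) := Finset.Icc (c + 1) b ×ˢ Finset.Icc b (d - 1) with hKdef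
  obtain ⟨hF00, hFl0, hFsh, hFch, hFr, hFlr⟩ := hF
  have hF0 : μ 0 = ∅ := hF00
  have hFl : μ (Fin.last s) = Staircase n α := hFl0
  have hKmem : ∀ q : ℕ × ℕ, q ∈ K ↔ c + 1 ≤ q.1 ∧ q.1 ≤ b ∧ b ≤ q.2 ∧ q.2 ≤ d - 1 := by
    intro q; rw [hKdef]; simp only [Finset.mem_product, Finset.mem_Icc]; tauto
  have hRmem : ∀ (x : ℕ) (q : ℕ × ℕ), q ∈ Rect n x ↔ 1 ≤ q.1 ∧ q.1 ≤ x ∧ x ≤ q.2 ∧ q.2 ≤ n - 1 := by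
    intro x q; simp only [Rect, Finset.mem_product, Finset.mem_Icc]; tauto
  have hμmono : ∀ (x y : ℕ) (hxy : x ≤ y) (hy : y ≤ s), μ ⟨x, by omega⟩ ⊆ μ ⟨y, by omega⟩ :=
    chain_mono μ hFch
  have hμsub : ∀ j : Fin (s + 1), μ j ⊆ Staircase n α := fun j => (hFsh j).1
  have hμrows : ∀ jv, ∀ (hjv : jv ≤ p), ∀ q ∈ μ ⟨jv, by omega⟩, q.1 ≤ c := by
    intro jv hjv q hq
    obtain ⟨i, h1, h2, hR⟩ := buildup μ (fun i => Rect n (a i)) hF0 hFr jv (by omega) q hq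
    have := (hRmem (a i) q).mp hR
    have := haC i h1 (by omega)
    omega
  have hμlow : ∀ q ∈ Staircase n α, q.2 ≤ d - 1 → q ∈ μ ⟨p, by omega⟩ := by
    intro q hq hq2
    have hqs : q ∈ μ ⟨p + (s - p), by omega⟩ := by
      rw [fin_congr μ (p + (s - p)) s (by omega) (by omega) (by omega)]
      have hlast : (⟨s, by omega⟩ : Fin (s + 1)) = Fin.last s := rfl
      rw [hlast, hFl]
      exact hq
    exact descend μ (fun i => Rect n (a i)) hFr p q
      (fun i h1 h2 hmem => by
        rw [hRmem] at hmem
        have := haD i h1 h2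
        omega) (s - p) (by omega) hqs
  have hdisjμ : ∀ (j : Fin (s + 1)), ∀ q ∈ μ j, q ∉ K := fun j q hq hqK =>
    hKS q hqK (hμsub j hq)
  have hFrN : ∀ iv, ∀ (h : iv < s), μ ⟨iv + 1, by omega⟩ \ μ ⟨iv, by omega⟩ ⊆ Rect n (a (iv + 1)) :=
    fun iv h => hFr ⟨iv, h⟩
  have hFlrN : ∀ iv, ∀ (h : iv < s),
      IsLR (μ ⟨iv + 1, by omega⟩ \ μ ⟨iv, by omega⟩) (lam (iv + 1)) (T ⟨iv, h⟩) :=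
    fun iv h => hFlr ⟨iv, h⟩
  refine ⟨?_, ?_, ?_, ?_, ?_, ?_⟩
  · -- initial shape
    show phiShapeN s p hp K μ ↑(0 : Fin (s + 2)) = ∅
    rw [Fin.val_zero, phiShapeN_le hp K μ 0 (by omega)]
    exact hF0
  · -- final shape
    show phiShapeN s p hp K μ ↑(Fin.last (s + 1)) = Staircase n (insert b α)
    rw [Fin.val_last, phiShapeN_gt hp K μ (s + 1) (by omega) (by omega)]
    rw [fin_congr μ (s + 1 - 1) s (by omega) (by omega) (by omega)]
    have hlast : (⟨s, by omega⟩ : Fin (s + 1)) = Fin.last s := rfl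
    rw [hlast, hFl, hstair]
  · -- shapes
    intro j
    show IsShapeIn (Staircase n (insert b α)) (phiShapeN s p hp K μ ↑j)
    have hjlt : (j : ℕ) < s + 2 := j.isLt
    by_cases hj : (j : ℕ) ≤ p
    · rw [phiShapeN_le hp K μ ↑j hj]
      constructor
      · intro q hq
        rw [hstair]
        exact Finset.mem_union_left _ (hμsub _ hq)
      · intro q hqμ r hr hr1 hr2
        have hrow := hμrows (↑j) hj q hqμ
        have hrS : r ∈ Staircase n α := by
          rw [hstair] at hr
          rcases Finset.mem_union.mp hr with h | h
          · exact h
          · exfalso; have := (hKmem r).mp h; omega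
        exact (hFsh ⟨↑j, by omega⟩).2 q hqμ r hrS hr1 hr2
    · rw [phiShapeN_gt hp K μ ↑j (by omega) (by omega)]
      constructor
      · intro q hq
        rw [hstair]
        rcases Finset.mem_union.mp hq with h | h
        · exact Finset.mem_union_left _ (hμsub _ h)
        · exact Finset.mem_union_right _ h
      · intro q hqμ r hr hr1 hr2
        rw [hstair] at hr
        rcases Finset.mem_union.mp hr with hrS | hrK
        · rcases Finset.mem_union.mp hqμ with hqm | hqK
          · exact Finset.mem_union_left _ ((hFsh _).2 q hqm r hrS hr1 hr2)
          · have hq2 := (hKmem q).mp hqK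
            have hrp : r ∈ μ ⟨p, by omega⟩ := hμlow r hrS (by omega)
            exact Finset.mem_union_left _ (hμmono p (↑j - 1) (by omega) (by omega) hrp)
        · exact Finset.mem_union_right _ hrK
  · -- chain
    intro i
    show phiShapeN s p hp K μ ↑(i.castSucc) ⊆ phiShapeN s p hp K μ ↑(i.succ)
    rw [Fin.coe_castSucc, Fin.val_succ]
    have hilt : (i : ℕ) < s + 1 := i.isLt
    by_cases h1 : (i : ℕ) + 1 ≤ p
    · rw [phiShapeN_le hp K μ ↑i (by omega), phiShapeN_le hp K μ (↑i + 1) h1]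
      exact hμmono ↑i (↑i + 1) (by omega) (by omega)
    · by_cases h2 : (i : ℕ) ≤ p
      · rw [phiShapeN_le hp K μ ↑i h2, phiShapeN_gt hp K μ (↑i + 1) (by omega) (by omega)]
        rw [fin_congr μ (↑i + 1 - 1) ↑i (by omega) (by omega) (by omega)]
        exact Finset.subset_union_left
      · rw [phiShapeN_gt hp K μ ↑i (by omega) (by omega),
          phiShapeN_gt hp K μ (↑i + 1) (by omega) (by omega)]
        rw [fin_congr μ (↑i + 1 - 1) ↑i (by omega) (by omega) (by omega)]
        exact Finset.union_subset_union_left (hμmono (↑i - 1) ↑i (by omega) (by omega))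
  · -- rectangles
    intro i
    have hilt : (i : ℕ) < s + 1 := i.isLt
    show phiShapeN s p hp K μ ↑(i.succ) \ phiShapeN s p hp K μ ↑(i.castSucc)
      ⊆ Rect n ((fun i => if i ≤ p then a i else if i = p + 1 then b else a (i - 1)) (↑i + 1))
    rw [Fin.coe_castSucc, Fin.val_succ]
    by_cases h1 : (i : ℕ) + 1 ≤ p
    · have ha1 : (fun i => if i ≤ p then a i else if i = p + 1 then b else a (i - 1)) ((i : ℕ) + 1)
          = a (↑i + 1) := by beta_reduce; rw [if_pos h1]
      rw [ha1, phiShapeN_le hp K μ ↑i (by omega), phiShapeN_le hp K μ (↑i + 1) h1]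
      exact hFrN ↑i (by omega)
    · by_cases h2 : (i : ℕ) = p
      · have ha1 : (fun i => if i ≤ p then a i else if i = p + 1 then b else a (i - 1)) ((i : ℕ) + 1)
            = b := by beta_reduce; rw [if_neg h1, if_pos (by omega)]
        rw [ha1, phiShapeN_le hp K μ ↑i (by omega),
          phiShapeN_gt hp K μ (↑i + 1) (by omega) (by omega),
          fin_congr μ (↑i + 1 - 1) ↑i (by omega) (by omega) (by omega)]
        intro x hx
        have hx' := Finset.mem_sdiff.mp hx
        rcases Finset.mem_union.mp hx'.1 with h | h
        · exact absurd h hx'.2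
        · exact hKR h
      · have ha1 : (fun i => if i ≤ p then a i else if i = p + 1 then b else a (i - 1)) ((i : ℕ) + 1)
            = a ↑i := by
          beta_reduce
          rw [if_neg h1, if_neg (by omega)]
          congr 1
        rw [ha1, phiShapeN_gt hp K μ ↑i (by omega) (by omega),
          phiShapeN_gt hp K μ (↑i + 1) (by omega) (by omega),
          fin_congr μ (↑i + 1 - 1) ↑i (by omega) (by omega) (by omega)]
        intro x hx
        have hx' := Finset.mem_sdiff.mp hx
        rcases Finset.mem_union.mp hx'.1 with h | h
        · have hxx : x ∈ μ ⟨↑i, by omega⟩ \ μ ⟨↑i - 1, by omega⟩ :=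
            Finset.mem_sdiff.mpr ⟨h, fun hcon => hx'.2 (Finset.mem_union_left _ hcon)⟩
          have h3 := hFrN (↑i - 1) (by omega)
          rw [fin_congr μ (↑i - 1 + 1) ↑i (by omega) (by omega) (by omega)] at h3
          have e : (i : ℕ) - 1 + 1 = (i : ℕ) := by omega
          rw [e] at h3
          exact h3 hxx
        · exact absurd (Finset.mem_union_right _ h) hx'.2
  · -- LR
    intro i
    have hilt : (i : ℕ) < s + 1 := i.isLt
    show IsLR (phiShapeN s p hp K μ ↑(i.succ) \ phiShapeN s p hp K μ ↑(i.castSucc))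
      ((fun i jj => if i ≤ p then lam i jj
        else if i = p + 1 then (if 1 ≤ jj ∧ jj ≤ b - c then d - b else 0)
        else lam (i - 1) jj) (↑i + 1))
      (phiFillN s p hp c K T ↑i)
    rw [Fin.coe_castSucc, Fin.val_succ]
    by_cases h1 : (i : ℕ) + 1 ≤ p
    · rw [phiShapeN_le hp K μ ↑i (by omega), phiShapeN_le hp K μ (↑i + 1) h1,
        phiFillN_lt hp c K T ↑i (by omega)]
      exact IsLR_congr (hFlrN ↑i (by omega)) rfl
        (fun j hj => by beta_reduce; rw [if_pos h1]) (fun q => rfl)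
    · by_cases h2 : (i : ℕ) = p
      · rw [phiShapeN_le hp K μ ↑i (by omega),
          phiShapeN_gt hp K μ (↑i + 1) (by omega) (by omega),
          phiFillN_eq hp c K T ↑i h2,
          fin_congr μ (↑i + 1 - 1) ↑i (by omega) (by omega) (by omega)]
        have hset : (μ ⟨↑i, by omega⟩ ∪ K) \ μ ⟨↑i, by omega⟩
            = Finset.Icc (c + 1) b ×ˢ Finset.Icc b (d - 1) := by
          rw [← hKdef]
          ext x
          simp only [Finset.mem_sdiff, Finset.mem_union]
          constructor
          · rintro ⟨h | h, hn⟩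
            · exact absurd h hn
            · exact h
          · intro hx
            exact ⟨Or.inr hx, fun hcon => hdisjμ _ x hcon hx⟩
        exact IsLR_congr (canonical_isLR b c d hcb hbd) hset
          (fun j hj => by beta_reduce; rw [if_neg (by omega), if_pos (by omega), kap])
          (fun q => rfl)
      · rw [phiShapeN_gt hp K μ ↑i (by omega) (by omega),
          phiShapeN_gt hp K μ (↑i + 1) (by omega) (by omega),
          phiFillN_gt hp c K T ↑i (by omega) (by omega),
          fin_congr μ (↑i + 1 - 1) ↑i (by omega) (by omega) (by omega)]
        have hset : (μ ⟨↑i, by omega⟩ ∪ K) \ (μ ⟨↑i - 1, by omega⟩ ∪ K)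
            = μ ⟨↑i - 1 + 1, by omega⟩ \ μ ⟨↑i - 1, by omega⟩ := by
          rw [fin_congr μ (↑i - 1 + 1) ↑i (by omega) (by omega) (by omega)]
          ext x
          simp only [Finset.mem_sdiff, Finset.mem_union, not_or]
          constructor
          · rintro ⟨h | h, hn1, hn2⟩
            · exact ⟨h, hn1⟩
            · exact absurd h hn2
          · intro hx
            exact ⟨Or.inl hx.1, hx.2, hdisjμ _ x hx.1⟩
        exact IsLR_congr (hFlrN (↑i - 1) (by omega)) hset
          (fun j hj => by
            beta_reduce
            rw [if_neg h1, if_neg (by omega)]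
            congr 1
            omega)
          (fun q => rfl)
lemma fwd_inv (s p : ℕ) (hp : p ≤ s) (c : ℕ) (K : Finset (ℕ × ℕ))
    (μ : Fin (s + 1) → Finset (ℕ × ℕ)) (T : Fin s → ℕ × ℕ → ℕ)
    (hdis : ∀ j : Fin (s + 1), ∀ q ∈ μ j, q ∉ K) :
    (∀ jv, ∀ (h : jv < s + 1),
      psiShapeN s p hp K (fun j => phiShapeN s p hp K μ ↑j) jv = μ ⟨jv, h⟩) ∧
    (∀ iv, ∀ (h : iv < s),
      psiFillN s p hp (fun i => phiFillN s p hp c K T ↑i) iv = T ⟨iv, h⟩) := by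
  constructor
  · intro jv h
    by_cases hj : jv ≤ p
    · rw [psiShapeN_le hp K _ jv hj]
      show phiShapeN s p hp K μ jv = μ ⟨jv, h⟩
      rw [phiShapeN_le hp K μ jv hj]
    · rw [psiShapeN_gt hp K _ jv (by omega) (by omega)]
      show phiShapeN s p hp K μ (jv + 1) \ K = μ ⟨jv, h⟩
      rw [phiShapeN_gt hp K μ (jv + 1) (by omega) (by omega),
        fin_congr μ (jv + 1 - 1) jv (by omega) (by omega) (by omega)]
      ext x
      simp only [Finset.mem_sdiff, Finset.mem_union]
      constructor
      · rintro ⟨h1 | h1, h2⟩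
        · exact h1
        · exact absurd h1 h2
      · intro hx
        exact ⟨Or.inl hx, hdis _ x hx⟩
  · intro iv h
    by_cases hi : iv < p
    · rw [psiFillN_lt hp _ iv hi]
      show phiFillN s p hp c K T iv = T ⟨iv, h⟩
      rw [phiFillN_lt hp c K T iv hi]
    · rw [psiFillN_ge hp _ iv (by omega) (by omega)]
      show phiFillN s p hp c K T (iv + 1) = T ⟨iv, h⟩
      rw [phiFillN_gt hp c K T (iv + 1) (by omega) (by omega),
        fin_congr T (iv + 1 - 1) iv (by omega) (by omega) (by omega)]

set_option maxHeartbeats 2000000 in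
lemma bwd (n s : ℕ) (α : Finset ℕ) (b c d : ℕ) (hcb : c < b) (hbd : b < d)
    (hc : c ∈ α) (hd : d ∈ α) (hc1 : 1 ≤ c) (hdn : d ≤ n - 1)
    (a : ℕ → ℕ) (lam : ℕ → ℕ → ℕ) (p : ℕ) (hp : p ≤ s)
    (haC : ∀ i, 1 ≤ i → i ≤ p → a i ≤ c)
    (haD : ∀ i, p < i → i ≤ s → d ≤ a i)
    (hstair : Staircase n (insert b α)
      = Staircase n α ∪ Finset.Icc (c + 1) b ×ˢ Finset.Icc b (d - 1))
    (hKS : ∀ q ∈ Finset.Icc (c + 1) b ×ˢ Finset.Icc b (d - 1), q ∉ Staircase n α)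
    (hKR : Finset.Icc (c + 1) b ×ˢ Finset.Icc b (d - 1) ⊆ Rect n b)
    (ν : Fin (s + 2) → Finset (ℕ × ℕ)) (U : Fin (s + 1) → ℕ × ℕ → ℕ)
    (hG : IsFilteredTableau n (s + 1) (insert b α)
      (fun i => if i ≤ p then a i else if i = p + 1 then b else a (i - 1))
      (fun i jj => if i ≤ p then lam i jj
        else if i = p + 1 then (if 1 ≤ jj ∧ jj ≤ b - c then d - b else 0)
        else lam (i - 1) jj) (ν, U)) :
    IsFilteredTableau n s α a lam
      (fun j => psiShapeN s p hp (Finset.Icc (c + 1) b ×ˢ Finset.Icc b (d - 1)) ν ↑j,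
       fun i => psiFillN s p hp U ↑i) ∧
    (∀ jv, ∀ (h : jv < s + 2),
      phiShapeN s p hp (Finset.Icc (c + 1) b ×ˢ Finset.Icc b (d - 1))
        (fun j => psiShapeN s p hp (Finset.Icc (c + 1) b ×ˢ Finset.Icc b (d - 1)) ν ↑j) jv
        = ν ⟨jv, h⟩) ∧
    (∀ iv, ∀ (h : iv < s + 1),
      phiFillN s p hp c (Finset.Icc (c + 1) b ×ˢ Finset.Icc b (d - 1))
        (fun i => psiFillN s p hp U ↑i) iv = U ⟨iv, h⟩) := by
  classical
  set K : Finset (ℕ × ℕ) := Finset.Icc (c + 1) b ×ˢ Finset.Icc b (d - 1) with hKdef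
  obtain ⟨hν00, hνl0, hνsh, hνch, hνr, hνlr⟩ := hG
  have hν0 : ν 0 = ∅ := hν00
  have hνl : ν (Fin.last (s + 1)) = Staircase n (insert b α) := hνl0
  have hKmem : ∀ q : ℕ × ℕ, q ∈ K ↔ c + 1 ≤ q.1 ∧ q.1 ≤ b ∧ b ≤ q.2 ∧ q.2 ≤ d - 1 := by
    intro q; rw [hKdef]; simp only [Finset.mem_product, Finset.mem_Icc]; tauto
  have hRmem : ∀ (x : ℕ) (q : ℕ × ℕ), q ∈ Rect n x ↔ 1 ≤ q.1 ∧ q.1 ≤ x ∧ x ≤ q.2 ∧ q.2 ≤ n - 1 := by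
    intro x q; simp only [Rect, Finset.mem_product, Finset.mem_Icc]; tauto
  have hSmem : ∀ q : ℕ × ℕ, q ∈ Staircase n α ↔ ∃ e ∈ α, q ∈ Rect n e := by
    intro q; simp [Staircase]
  have ha'le : ∀ x, x ≤ p →
      (fun i => if i ≤ p then a i else if i = p + 1 then b else a (i - 1)) x = a x :=
    fun x hx => by beta_reduce; rw [if_pos hx]
  have ha'p1 : (fun i => if i ≤ p then a i else if i = p + 1 then b else a (i - 1)) (p + 1) = b := by
    beta_reduce; rw [if_neg (by omega)]; simp
  have ha'gt : ∀ x, p + 1 < x →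
      (fun i => if i ≤ p then a i else if i = p + 1 then b else a (i - 1)) x = a (x - 1) :=
    fun x hx => by beta_reduce; rw [if_neg (by omega), if_neg (by omega)]
  have hlam'le : ∀ x, x ≤ p → ∀ jj,
      (fun i jj => if i ≤ p then lam i jj
        else if i = p + 1 then (if 1 ≤ jj ∧ jj ≤ b - c then d - b else 0)
        else lam (i - 1) jj) x jj = lam x jj :=
    fun x hx jj => by beta_reduce; rw [if_pos hx]
  have hlam'p1 : ∀ jj,
      (fun i jj => if i ≤ p then lam i jj
        else if i = p + 1 then (if 1 ≤ jj ∧ jj ≤ b - c then d - b else 0)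
        else lam (i - 1) jj) (p + 1) jj = kap b c d jj :=
    fun jj => by simp only [kap]; beta_reduce; rw [if_neg (by omega)]; simp
  have hlam'gt : ∀ x, p + 1 < x → ∀ jj,
      (fun i jj => if i ≤ p then lam i jj
        else if i = p + 1 then (if 1 ≤ jj ∧ jj ≤ b - c then d - b else 0)
        else lam (i - 1) jj) x jj = lam (x - 1) jj :=
    fun x hx jj => by beta_reduce; rw [if_neg (by omega), if_neg (by omega)]
  have hνchN : ∀ jv, ∀ (h : jv < s + 1), ν ⟨jv, by omega⟩ ⊆ ν ⟨jv + 1, by omega⟩ :=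
    fun jv h => hνch ⟨jv, h⟩
  have hνrN : ∀ jv, ∀ (h : jv < s + 1), ν ⟨jv + 1, by omega⟩ \ ν ⟨jv, by omega⟩
      ⊆ Rect n ((fun i => if i ≤ p then a i else if i = p + 1 then b else a (i - 1)) (jv + 1)) :=
    fun jv h => hνr ⟨jv, h⟩
  have hνlrN : ∀ jv, ∀ (h : jv < s + 1), IsLR (ν ⟨jv + 1, by omega⟩ \ ν ⟨jv, by omega⟩)
      ((fun i jj => if i ≤ p then lam i jj
        else if i = p + 1 then (if 1 ≤ jj ∧ jj ≤ b - c then d - b else 0)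
        else lam (i - 1) jj) (jv + 1)) (U ⟨jv, h⟩) :=
    fun jv h => hνlr ⟨jv, h⟩
  have hνmono : ∀ (x y : ℕ) (hxy : x ≤ y) (hy : y ≤ s + 1), ν ⟨x, by omega⟩ ⊆ ν ⟨y, by omega⟩ :=
    chain_mono ν hνch
  have hνrows : ∀ jv, ∀ (hjv : jv ≤ p), ∀ q ∈ ν ⟨jv, by omega⟩, q.1 ≤ c := by
    intro jv hjv q hq
    obtain ⟨i, h1, h2, hR⟩ := buildup ν
      (fun x => Rect n ((fun i => if i ≤ p then a i else if i = p + 1 then b else a (i - 1)) x))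
      hν0 hνr jv (by omega) q hq
    rw [ha'le i (by omega)] at hR
    rw [hRmem] at hR
    have := haC i h1 (by omega)
    omega
  have hνlast : ν ⟨s + 1, by omega⟩ = Staircase n α ∪ K := by
    have e : (⟨s + 1, by omega⟩ : Fin (s + 2)) = Fin.last (s + 1) := rfl
    rw [e, hνl, hstair, hKdef]
  have hνK : K ⊆ ν ⟨p + 1, by omega⟩ := by
    intro q hqK
    have hq2 := (hKmem q).mp hqK
    have hqs : q ∈ ν ⟨p + 1 + (s - p), by omega⟩ := by
      rw [fin_congr ν (p + 1 + (s - p)) (s + 1) (by omega) (by omega) (by omega), hνlast]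
      exact Finset.mem_union_right _ hqK
    exact descend ν
      (fun x => Rect n ((fun i => if i ≤ p then a i else if i = p + 1 then b else a (i - 1)) x))
      hνr (p + 1) q
      (fun i h1 h2 hmem => by
        beta_reduce at hmem
        rw [if_neg (show ¬ i ≤ p by omega), if_neg (show ¬ i = p + 1 by omega), hRmem] at hmem
        have := haD (i - 1) (by omega) (by omega)
        omega) (s - p) (by omega) hqs
  have hνpdisj : ∀ q ∈ K, q ∉ ν ⟨p, by omega⟩ := by
    intro q hqK hqp
    have := hνrows p (le_refl p) q hqp
    have := (hKmem q).mp hqK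
    omega
  have hstep := rect_piece_unique b c d hcb hbd (ν ⟨p + 1, by omega⟩ \ ν ⟨p, by omega⟩)
    (U ⟨p, by omega⟩)
    (by
      rw [← hKdef]
      intro q hqK
      exact Finset.mem_sdiff.mpr ⟨hνK hqK, hνpdisj q hqK⟩)
    (IsLR_congr (hνlrN p (by omega)) rfl (fun j hj => (hlam'p1 j).symm) (fun q => rfl))
  obtain ⟨hSK, hUp⟩ := hstep
  rw [← hKdef] at hSK
  have hps : p < s := by
    rcases Nat.lt_or_ge p s with h | h
    · exact h
    · exfalso
      have hpe : p = s := by omega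
      have hdd : ((d, d) : ℕ × ℕ) ∈ Staircase n α :=
        (hSmem (d, d)).mpr ⟨d, hd, by rw [hRmem]; simp only []; omega⟩
      have h1 : ((d, d) : ℕ × ℕ) ∈ ν ⟨p + 1, by omega⟩ := by
        rw [fin_congr ν (p + 1) (s + 1) (by omega) (by omega) (by omega), hνlast]
        exact Finset.mem_union_left _ hdd
      have h2 : ((d, d) : ℕ × ℕ) ∉ K := by
        rw [hKmem]; simp only []; omega
      have h3 : ((d, d) : ℕ × ℕ) ∈ ν ⟨p, by omega⟩ := by
        by_contra h4
        exact h2 (hSK ▸ Finset.mem_sdiff.mpr ⟨h1, h4⟩)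
      have := hνrows p (le_refl p) (d, d) h3
      simp only [] at this
      omega
  have hνstep' : ν ⟨p, by omega⟩ = ν ⟨p + 1, by omega⟩ \ K := by
    ext x
    simp only [Finset.mem_sdiff]
    constructor
    · intro hx
      exact ⟨hνmono p (p + 1) (by omega) (by omega) hx, fun hxK => hνpdisj x hxK hx⟩
    · intro ⟨hx1, hx2⟩
      by_contra h4
      exact hx2 (hSK ▸ Finset.mem_sdiff.mpr ⟨hx1, h4⟩)
  have hνunion : ν ⟨p + 1, by omega⟩ = ν ⟨p, by omega⟩ ∪ K := by
    ext x
    simp only [Finset.mem_union]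
    constructor
    · intro hx
      by_cases hxp : x ∈ ν ⟨p, by omega⟩
      · exact Or.inl hxp
      · exact Or.inr (hSK ▸ Finset.mem_sdiff.mpr ⟨hx, hxp⟩)
    · rintro (hx | hx)
      · exact hνmono p (p + 1) (by omega) (by omega) hx
      · exact hνK hx
  have hνSub : ∀ jv, ∀ (hjv : jv ≤ p), ν ⟨jv, by omega⟩ ⊆ Staircase n α := by
    intro jv hjv q hq
    have hq1 : q ∈ Staircase n (insert b α) := by
      have := (hνsh ⟨jv, by omega⟩).1 hq
      exact this
    rw [hstair] at hq1
    rcases Finset.mem_union.mp hq1 with h | h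
    · exact h
    · exfalso
      have := hνrows jv hjv q hq
      have h2 := (hKmem q).mp (hKdef ▸ h)
      omega
  refine ⟨⟨?_, ?_, ?_, ?_, ?_, ?_⟩, ?_, ?_⟩
  · show psiShapeN s p hp K ν ↑(0 : Fin (s + 1)) = ∅
    rw [Fin.val_zero, psiShapeN_le hp K ν 0 (by omega)]
    exact hν0
  · show psiShapeN s p hp K ν ↑(Fin.last s) = Staircase n α
    rw [Fin.val_last, psiShapeN_gt hp K ν s hps (le_refl s), hνlast]
    ext x
    simp only [Finset.mem_sdiff, Finset.mem_union]
    constructor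
    · rintro ⟨h | h, h2⟩
      · exact h
      · exact absurd h h2
    · intro hx
      exact ⟨Or.inl hx, fun hK => hKS x (hKdef ▸ hK) hx⟩
  · intro j
    show IsShapeIn (Staircase n α) (psiShapeN s p hp K ν ↑j)
    have hjlt : (j : ℕ) < s + 1 := j.isLt
    by_cases hj : (j : ℕ) ≤ p
    · rw [psiShapeN_le hp K ν ↑j hj]
      exact ⟨hνSub ↑j hj, fun q hq r hr h1 h2 => (hνsh ⟨↑j, by omega⟩).2 q hq r
        (by rw [hstair]; exact Finset.mem_union_left _ hr) h1 h2⟩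
    · rw [psiShapeN_gt hp K ν ↑j (by omega) (by omega)]
      constructor
      · intro x hx
        have hx' := Finset.mem_sdiff.mp hx
        have hx2 : x ∈ Staircase n (insert b α) := (hνsh ⟨↑j + 1, by omega⟩).1 hx'.1
        rw [hstair] at hx2
        rcases Finset.mem_union.mp hx2 with h | h
        · exact h
        · exact absurd h hx'.2
      · intro q hq r hr h1 h2
        have hq' := Finset.mem_sdiff.mp hq
        refine Finset.mem_sdiff.mpr ⟨(hνsh ⟨↑j + 1, by omega⟩).2 q hq'.1 r
          (by rw [hstair]; exact Finset.mem_union_left _ hr) h1 h2,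
          fun hK => hKS r (hKdef ▸ hK) hr⟩
  · intro i
    have hilt : (i : ℕ) < s := i.isLt
    show psiShapeN s p hp K ν ↑(i.castSucc) ⊆ psiShapeN s p hp K ν ↑(i.succ)
    rw [Fin.coe_castSucc, Fin.val_succ]
    by_cases h1 : (i : ℕ) + 1 ≤ p
    · rw [psiShapeN_le hp K ν ↑i (by omega), psiShapeN_le hp K ν (↑i + 1) h1]
      exact hνchN ↑i (by omega)
    · by_cases h2 : (i : ℕ) ≤ p
      · rw [psiShapeN_le hp K ν ↑i h2, psiShapeN_gt hp K ν (↑i + 1) (by omega) (by omega)]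
        have he : (i : ℕ) = p := by omega
        intro x hx
        refine Finset.mem_sdiff.mpr ⟨hνmono ↑i (↑i + 1 + 1) (by omega) (by omega) hx, ?_⟩
        intro hxK
        have hxp : x ∈ ν ⟨p, by omega⟩ := by
          rw [fin_congr ν p ↑i (by omega) (by omega) he.symm]
          exact hx
        exact hνpdisj x hxK hxp
      · rw [psiShapeN_gt hp K ν ↑i (by omega) (by omega),
          psiShapeN_gt hp K ν (↑i + 1) (by omega) (by omega)]
        exact Finset.sdiff_subset_sdiff (hνchN (↑i + 1) (by omega)) subset_rfl
  · intro i
    have hilt : (i : ℕ) < s := i.isLt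
    show psiShapeN s p hp K ν ↑(i.succ) \ psiShapeN s p hp K ν ↑(i.castSucc)
      ⊆ Rect n (a (↑i + 1))
    rw [Fin.coe_castSucc, Fin.val_succ]
    by_cases h1 : (i : ℕ) + 1 ≤ p
    · rw [psiShapeN_le hp K ν ↑i (by omega), psiShapeN_le hp K ν (↑i + 1) h1]
      have h3 := hνrN ↑i (by omega)
      rw [ha'le (↑i + 1) h1] at h3
      exact h3
    · have hψ1 : psiShapeN s p hp K ν (↑i + 1) = ν ⟨↑i + 1 + 1, by omega⟩ \ K :=
        psiShapeN_gt hp K ν (↑i + 1) (by omega) (by omega)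
      have hψ0 : psiShapeN s p hp K ν ↑i = ν ⟨↑i + 1, by omega⟩ \ K := by
        by_cases h2 : (i : ℕ) ≤ p
        · have he : (i : ℕ) = p := by omega
          rw [psiShapeN_le hp K ν ↑i h2, fin_congr ν ↑i p (by omega) (by omega) he, hνstep',
            fin_congr ν (p + 1) (↑i + 1) (by omega) (by omega) (by omega)]
        · exact psiShapeN_gt hp K ν ↑i (by omega) (by omega)
      rw [hψ1, hψ0]
      have hKsub : K ⊆ ν ⟨↑i + 1, by omega⟩ := fun x hx =>
        hνmono (p + 1) (↑i + 1) (by omega) (by omega) (hνK hx)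
      have hsetEq : (ν ⟨↑i + 1 + 1, by omega⟩ \ K) \ (ν ⟨↑i + 1, by omega⟩ \ K)
          = ν ⟨↑i + 1 + 1, by omega⟩ \ ν ⟨↑i + 1, by omega⟩ := by
        ext x
        simp only [Finset.mem_sdiff]
        constructor
        · rintro ⟨⟨hx1, hx2⟩, hx3⟩
          exact ⟨hx1, fun hB => hx3 ⟨hB, hx2⟩⟩
        · rintro ⟨hx1, hx2⟩
          exact ⟨⟨hx1, fun hK => hx2 (hKsub hK)⟩, fun hc => hx2 hc.1⟩
      rw [hsetEq]
      have h3 := hνrN (↑i + 1) (by omega)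
      rw [ha'gt (↑i + 1 + 1) (by omega)] at h3
      have e : (i : ℕ) + 1 + 1 - 1 = ↑i + 1 := rfl
      rw [e] at h3
      exact h3
  · intro i
    have hilt : (i : ℕ) < s := i.isLt
    show IsLR (psiShapeN s p hp K ν ↑(i.succ) \ psiShapeN s p hp K ν ↑(i.castSucc))
      (lam (↑i + 1)) (psiFillN s p hp U ↑i)
    rw [Fin.coe_castSucc, Fin.val_succ]
    by_cases h1 : (i : ℕ) + 1 ≤ p
    · rw [psiShapeN_le hp K ν ↑i (by omega), psiShapeN_le hp K ν (↑i + 1) h1,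
        psiFillN_lt hp U ↑i (by omega)]
      exact IsLR_congr (hνlrN ↑i (by omega)) rfl
        (fun j hj => (hlam'le (↑i + 1) h1 j).symm) (fun q => rfl)
    · have hψ1 : psiShapeN s p hp K ν (↑i + 1) = ν ⟨↑i + 1 + 1, by omega⟩ \ K :=
        psiShapeN_gt hp K ν (↑i + 1) (by omega) (by omega)
      have hψ0 : psiShapeN s p hp K ν ↑i = ν ⟨↑i + 1, by omega⟩ \ K := by
        by_cases h2 : (i : ℕ) ≤ p
        · have he : (i : ℕ) = p := by omega
          rw [psiShapeN_le hp K ν ↑i h2, fin_congr ν ↑i p (by omega) (by omega) he, hνstep',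
            fin_congr ν (p + 1) (↑i + 1) (by omega) (by omega) (by omega)]
        · exact psiShapeN_gt hp K ν ↑i (by omega) (by omega)
      have hKsub : K ⊆ ν ⟨↑i + 1, by omega⟩ := fun x hx =>
        hνmono (p + 1) (↑i + 1) (by omega) (by omega) (hνK hx)
      have hsetEq : (ν ⟨↑i + 1 + 1, by omega⟩ \ K) \ (ν ⟨↑i + 1, by omega⟩ \ K)
          = ν ⟨↑i + 1 + 1, by omega⟩ \ ν ⟨↑i + 1, by omega⟩ := by
        ext x
        simp only [Finset.mem_sdiff]
        constructor
        · rintro ⟨⟨hx1, hx2⟩, hx3⟩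
          exact ⟨hx1, fun hB => hx3 ⟨hB, hx2⟩⟩
        · rintro ⟨hx1, hx2⟩
          exact ⟨⟨hx1, fun hK => hx2 (hKsub hK)⟩, fun hc => hx2 hc.1⟩
      rw [hψ1, hψ0, hsetEq, psiFillN_ge hp U ↑i (by omega) (by omega)]
      exact IsLR_congr (hνlrN (↑i + 1) (by omega)) rfl
        (fun j hj => (hlam'gt (↑i + 1 + 1) (by omega) j).symm) (fun q => rfl)
  · intro jv h
    by_cases hj : jv ≤ p
    · rw [phiShapeN_le hp K _ jv hj]
      show psiShapeN s p hp K ν jv = ν ⟨jv, h⟩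
      rw [psiShapeN_le hp K ν jv hj]
    · rw [phiShapeN_gt hp K _ jv (by omega) (by omega)]
      show psiShapeN s p hp K ν (jv - 1) ∪ K = ν ⟨jv, h⟩
      by_cases h2 : jv - 1 ≤ p
      · have he : jv = p + 1 := by omega
        rw [psiShapeN_le hp K ν (jv - 1) h2,
          fin_congr ν (jv - 1) p (by omega) (by omega) (by omega),
          fin_congr ν jv (p + 1) (by omega) (by omega) he, hνunion]
      · rw [psiShapeN_gt hp K ν (jv - 1) (by omega) (by omega),
          fin_congr ν (jv - 1 + 1) jv (by omega) (by omega) (by omega)]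
        exact Finset.sdiff_union_of_subset
          (fun x hx => hνmono (p + 1) jv (by omega) (by omega) (hνK hx))
  · intro iv h
    by_cases hi : iv < p
    · rw [phiFillN_lt hp c K _ iv hi]
      show psiFillN s p hp U iv = U ⟨iv, h⟩
      rw [psiFillN_lt hp U iv hi]
    · by_cases h2 : iv = p
      · rw [phiFillN_eq hp c K _ iv h2, hKdef]
        rw [fin_congr U iv p (by omega) (by omega) h2]
        exact hUp.symm
      · rw [phiFillN_gt hp c K _ iv (by omega) (by omega)]
        show psiFillN s p hp U (iv - 1) = U ⟨iv, h⟩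
        rw [psiFillN_ge hp U (iv - 1) (by omega) (by omega),
          fin_congr U (iv - 1 + 1) iv (by omega) (by omega) (by omega)]

end InsAux

/-- Let `Λ = ((a 1, lam 1),…,(a s, lam s))` be a Grassmannian Schubert problem datum
for `α`, and let `c < b < d` be with `c, d` consecutive elements of `α` and `b ∉ α`.
Inserting the pair `(b, κ)`, where `κ` is the rectangular partition with `b − c` rows
and `d − b` columns (whose boxes in `⎡_{α ∪ {b}}` form
`K = {(r, col) : c < r ≤ b, b ≤ col ≤ d−1}`, filled with entry `r − c` in row `r`),
at the sorted position `p` gives a bijection between filtered tableaux of shape `⎡_α`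
with content `Λ` and filtered tableaux of shape `⎡_{α ∪ {b}}` with content `Λ'`. -/


theorem insertion_bijection (n s : ℕ) (α : Finset ℕ)
    (hαsub : α ⊆ Finset.Icc 1 (n - 1))
    (b c d : ℕ) (hc : c ∈ α) (hd : d ∈ α) (hcb : c < b) (hbd : b < d)
    (hconsec : ∀ e ∈ α, e ≤ c ∨ d ≤ e) (hbα : b ∉ α)
    (a : ℕ → ℕ) (lam : ℕ → ℕ → ℕ)
    (hmono : ∀ i, 1 ≤ i → i < s → a i ≤ a (i + 1))
    (haα : ∀ i, 1 ≤ i → i ≤ s → a i ∈ α)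
    (hpart : ∀ i, 1 ≤ i → i ≤ s →
      (∀ q r, 1 ≤ q → q ≤ r → lam i r ≤ lam i q) ∧ lam i 1 ≤ n - a i ∧
      (∀ r, a i < r → lam i r = 0))
    (p : ℕ) (hp : p ≤ s)
    (hpos : ∀ i, 1 ≤ i → i ≤ s → (i ≤ p ↔ a i < b)) :
    ∃ Φ : {F // IsFilteredTableau n s α a lam F} →
          {G // IsFilteredTableau n (s + 1) (insert b α)
                  (fun i => if i ≤ p then a i else if i = p + 1 then b else a (i - 1))
                  (fun i jj => if i ≤ p then lam i jj
                    else if i = p + 1 then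
                      (if 1 ≤ jj ∧ jj ≤ b - c then d - b else 0)
                    else lam (i - 1) jj) G},
      Function.Bijective Φ ∧
      ∀ F : {F // IsFilteredTableau n s α a lam F},
        (∀ (jv : ℕ) (hjv : jv < s + 2),
          (∀ _ : jv ≤ p, (Φ F).1.1 ⟨jv, hjv⟩ = F.1.1 ⟨jv, by omega⟩) ∧
          (∀ _ : p < jv, (Φ F).1.1 ⟨jv, hjv⟩ =
            F.1.1 ⟨jv - 1, by omega⟩ ∪ Finset.Icc (c + 1) b ×ˢ Finset.Icc b (d - 1))) ∧
        (∀ (iv : ℕ) (hiv : iv < s + 1),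
          (∀ _ : iv < p, (Φ F).1.2 ⟨iv, hiv⟩ = F.1.2 ⟨iv, by omega⟩) ∧
          (∀ _ : iv = p, (Φ F).1.2 ⟨iv, hiv⟩ =
            fun q => if q ∈ Finset.Icc (c + 1) b ×ˢ Finset.Icc b (d - 1)
              then q.1 - c else 0) ∧
          (∀ _ : p < iv, (Φ F).1.2 ⟨iv, hiv⟩ = F.1.2 ⟨iv - 1, by omega⟩)) := by
  classical
  have hc1 : 1 ≤ c := (Finset.mem_Icc.mp (hαsub hc)).1
  have hdn : d ≤ n - 1 := (Finset.mem_Icc.mp (hαsub hd)).2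
  have hKmem : ∀ q : ℕ × ℕ, q ∈ Finset.Icc (c + 1) b ×ˢ Finset.Icc b (d - 1) ↔
      c + 1 ≤ q.1 ∧ q.1 ≤ b ∧ b ≤ q.2 ∧ q.2 ≤ d - 1 := by
    intro q; simp only [Finset.mem_product, Finset.mem_Icc]; tauto
  have hRmem : ∀ (x : ℕ) (q : ℕ × ℕ), q ∈ Rect n x ↔
      1 ≤ q.1 ∧ q.1 ≤ x ∧ x ≤ q.2 ∧ q.2 ≤ n - 1 := by
    intro x q; simp only [Rect, Finset.mem_product, Finset.mem_Icc]; tauto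
  have hSmem : ∀ (β : Finset ℕ) (q : ℕ × ℕ), q ∈ Staircase n β ↔ ∃ e ∈ β, q ∈ Rect n e := by
    intro β q; simp [Staircase]
  have hKR : Finset.Icc (c + 1) b ×ˢ Finset.Icc b (d - 1) ⊆ Rect n b := by
    intro q hq; rw [hRmem]; have := (hKmem q).mp hq; omega
  have hKS : ∀ q ∈ Finset.Icc (c + 1) b ×ˢ Finset.Icc b (d - 1), q ∉ Staircase n α := by
    intro q hq hqS
    obtain ⟨e, he, heR⟩ := (hSmem α q).mp hqS
    rw [hRmem] at heR
    have hk := (hKmem q).mp hq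
    rcases hconsec e he with h | h <;> omega
  have hstair : Staircase n (insert b α)
      = Staircase n α ∪ Finset.Icc (c + 1) b ×ˢ Finset.Icc b (d - 1) := by
    ext q
    rw [Finset.mem_union, hSmem, hSmem]
    constructor
    · rintro ⟨e, he, heR⟩
      rcases Finset.mem_insert.mp he with rfl | he'
      · rw [hRmem] at heR
        by_cases hr : q.1 ≤ c
        · exact Or.inl ⟨c, hc, by rw [hRmem]; omega⟩
        · by_cases hcolq : q.2 ≤ d - 1
          · exact Or.inr ((hKmem q).mpr (by omega))
          · exact Or.inl ⟨d, hd, by rw [hRmem]; omega⟩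
      · exact Or.inl ⟨e, he', heR⟩
    · rintro (⟨e, he, heR⟩ | h)
      · exact ⟨e, Finset.mem_insert_of_mem he, heR⟩
      · exact ⟨b, Finset.mem_insert_self _ _, hKR h⟩
  have haC : ∀ i, 1 ≤ i → i ≤ p → a i ≤ c := by
    intro i h1 h2
    have hb' := (hpos i h1 (le_trans h2 hp)).mp h2
    have hmem := haα i h1 (le_trans h2 hp)
    rcases hconsec _ hmem with h | h
    · exact h
    · omega
  have haD : ∀ i, p < i → i ≤ s → d ≤ a i := by
    intro i h1 h2
    have h1' : 1 ≤ i := by omega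
    have hge : ¬ a i < b := fun hlt => absurd ((hpos i h1' h2).mpr hlt) (by omega)
    have hmem := haα i h1' h2
    rcases hconsec _ hmem with h | h
    · omega
    · exact h
  refine ⟨fun F =>
    ⟨(fun j => InsAux.phiShapeN s p hp (Finset.Icc (c + 1) b ×ˢ Finset.Icc b (d - 1)) F.1.1 ↑j,
      fun i => InsAux.phiFillN s p hp c (Finset.Icc (c + 1) b ×ˢ Finset.Icc b (d - 1)) F.1.2 ↑i),
     InsAux.fwd_mem n s α b c d hcb hbd hc hd hc1 hdn a lam p hp haC haD hstair hKS hKR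
       F.1.1 F.1.2 F.2⟩, ⟨?_, ?_⟩, ?_⟩
  · -- injective
    intro F1 F2 hEq
    have hμ1 := congrArg (fun G => G.1.1) hEq
    have hT1 := congrArg (fun G => G.1.2) hEq
    simp only [] at hμ1 hT1
    have hdis1 : ∀ j : Fin (s + 1), ∀ q ∈ F1.1.1 j,
        q ∉ Finset.Icc (c + 1) b ×ˢ Finset.Icc b (d - 1) := by
      intro j q hq hqK
      exact hKS q hqK ((F1.2.2.2.1 j).1 hq)
    have hdis2 : ∀ j : Fin (s + 1), ∀ q ∈ F2.1.1 j,
        q ∉ Finset.Icc (c + 1) b ×ˢ Finset.Icc b (d - 1) := by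
      intro j q hq hqK
      exact hKS q hqK ((F2.2.2.2.1 j).1 hq)
    obtain ⟨hinvS1, hinvF1⟩ := InsAux.fwd_inv s p hp c _ F1.1.1 F1.1.2 hdis1
    obtain ⟨hinvS2, hinvF2⟩ := InsAux.fwd_inv s p hp c _ F2.1.1 F2.1.2 hdis2
    apply Subtype.ext
    apply Prod.ext
    · funext j
      have e1 := hinvS1 ↑j j.isLt
      have e2 := hinvS2 ↑j j.isLt
      rw [hμ1] at e1
      exact (e1.symm.trans e2 :)
    · funext i
      have e1 := hinvF1 ↑i i.isLt
      have e2 := hinvF2 ↑i i.isLt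
      rw [hT1] at e1
      exact (e1.symm.trans e2 :)
  · -- surjective
    rintro ⟨G, hG⟩
    obtain ⟨hmem, hSeq, hFeq⟩ := InsAux.bwd n s α b c d hcb hbd hc hd hc1 hdn a lam p hp
      haC haD hstair hKS hKR G.1 G.2 hG
    refine ⟨⟨(fun j => InsAux.psiShapeN s p hp
        (Finset.Icc (c + 1) b ×ˢ Finset.Icc b (d - 1)) G.1 ↑j,
      fun i => InsAux.psiFillN s p hp G.2 ↑i), hmem⟩, ?_⟩
    apply Subtype.ext
    apply Prod.ext
    · funext j
      exact hSeq ↑j j.isLt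
    · funext i
      exact hFeq ↑i i.isLt
  · -- spec
    intro F
    refine ⟨fun jv hjv => ⟨fun hle => ?_, fun hgt => ?_⟩,
      fun iv hiv => ⟨fun hlt => ?_, fun heq => ?_, fun hgt2 => ?_⟩⟩
    · show InsAux.phiShapeN s p hp (Finset.Icc (c + 1) b ×ˢ Finset.Icc b (d - 1)) F.1.1 jv
        = F.1.1 ⟨jv, by omega⟩
      rw [InsAux.phiShapeN_le hp _ _ jv hle]
    · show InsAux.phiShapeN s p hp (Finset.Icc (c + 1) b ×ˢ Finset.Icc b (d - 1)) F.1.1 jv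
        = F.1.1 ⟨jv - 1, by omega⟩ ∪ Finset.Icc (c + 1) b ×ˢ Finset.Icc b (d - 1)
      rw [InsAux.phiShapeN_gt hp _ _ jv hgt (by omega)]
    · show InsAux.phiFillN s p hp c (Finset.Icc (c + 1) b ×ˢ Finset.Icc b (d - 1)) F.1.2 iv
        = F.1.2 ⟨iv, by omega⟩
      rw [InsAux.phiFillN_lt hp c _ _ iv hlt]
    · show InsAux.phiFillN s p hp c (Finset.Icc (c + 1) b ×ˢ Finset.Icc b (d - 1)) F.1.2 iv
        = fun q => if q ∈ Finset.Icc (c + 1) b ×ˢ Finset.Icc b (d - 1) then q.1 - c else 0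
      rw [InsAux.phiFillN_eq hp c _ _ iv heq]
    · show InsAux.phiFillN s p hp c (Finset.Icc (c + 1) b ×ˢ Finset.Icc b (d - 1)) F.1.2 iv
        = F.1.2 ⟨iv - 1, by omega⟩
      rw [InsAux.phiFillN_gt hp c _ _ iv hgt2 (by omega)]
end

section
/- Let w be a permutation of {1,...,n} whose descent set is contained in {a_t} ∪ {positions ≤ a_t} in the strong sense that w has no descents after position a_t, and suppose w appears (with nonzero coefficient, modeled combinatorially via the a-Bruhat order) as the top of a chain id = v_0 ≤_{a_1} v_1 ≤_{a_2} ... ≤_{a_t} v_t = w where a_1 ≤ ... ≤ a_t. Then for each i, v_i has no descents after position a_i. In particular each v_i with v_i(1) > ... > v_i(a_i) is a valley permutation with floor at a_i. -/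
/-- If `id = v_0 ≤_{a 1} v_1 ≤_{a 2} ⋯ ≤_{a t} v_t` is a chain in the `a`-Bruhat
orders with `a 1 ≤ ⋯ ≤ a t`, then each `v i` has no descents after position `a i`;
in particular, if moreover `v i (1) > ⋯ > v i (a i)` then `v i` is a valley
permutation with floor at `a i`. -/
theorem chain_no_descents (n t : ℕ) (a : ℕ → ℕ) (v : ℕ → Equiv.Perm ℕ)
    (hv0 : v 0 = 1)
    (hfix : ∀ i, i ≤ t → FixOutside n (v i))
    (hmono : ∀ i, 1 ≤ i → i < t → a i ≤ a (i + 1))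
    (han : ∀ i, 1 ≤ i → i ≤ t → a i ≤ n)
    (hrel : ∀ i, 1 ≤ i → i ≤ t → ABruhat n (a i) (v (i - 1)) (v i)) :
    ∀ i, 1 ≤ i → i ≤ t →
      (∀ k, a i < k → k < n → v i k < v i (k + 1)) ∧
      ((∀ jj kk, 1 ≤ jj → jj < kk → kk ≤ a i → v i kk < v i jj) →
        IsValley n (a i) (v i)) := by
  have noDesc : ∀ i, 1 ≤ i → i ≤ t → ∀ k, a i < k → k < n → v i k < v i (k + 1) := by
    intro i
    induction i with
    | zero => intro h; omega
    | succ m ih =>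
      intro _ hmt k hak hkn
      have hrel' := hrel (m + 1) (by omega) hmt
      have hstep : v m k < v m (k + 1) := by
        rcases Nat.eq_zero_or_pos m with hm | hm
        · subst hm; simp [hv0]
        · have hmono' := hmono m hm (by omega)
          exact ih hm (by omega) k (by omega) hkn
      have := hrel'.2.2 k (k + 1) hak (by omega) (by omega)
      simpa using this hstep
  intro i hi hit
  refine ⟨noDesc i hi hit, fun hdec => ⟨hdec, ?_⟩⟩
  intro ii jj hii hij hjn
  induction jj with
  | zero => omega
  | succ m ihm =>
    rcases Nat.lt_or_ge ii m with h | h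
    · exact lt_trans (ihm (by omega) (by omega)) (noDesc i hi hit m (by omega) (by omega))
    · have : ii = m := by omega
      subst this
      exact noDesc i hi hit ii hii (by omega)
end
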